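/- arXiv:2110.10782 — 2 statements merged into one kernel-verified Lean document; each statement's English description precedes it below -/
import Mathlib

section
/- Let a ∈ ℝ, δ > 0, and let g₀ : [a-δ, a+δ] → ℝ be a C² function with g₀(r) > 0 for r ≠ a, g₀(a) = g₀'(a) = 0, and g₀''(a) > 0. Set g_ε = g₀ + ε. If τ : (0, ε₀) → [0, δ] satisfies τ(ε)/√ε → ∞ as ε → 0⁺, then √ε · ∫_{a-τ(ε)}^{a+τ(ε)} dr / g_ε(r) → π / √(g₀''(a)/2) as ε → 0⁺. -/
open MeasureTheory Filter Topology

lemma quad_bound {f : ℝ → ℝ} {a ρ k : ℝ} (hρ : 0 < ρ)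
    (hf1 : ∀ x ∈ Set.Icc (a-ρ) (a+ρ), HasDerivAt f (deriv f x) x)
    (hf2 : ∀ x ∈ Set.Icc (a-ρ) (a+ρ), HasDerivAt (deriv f) (deriv (deriv f) x) x)
    (h0 : f a = 0) (h1 : deriv f a = 0)
    (hk : ∀ x ∈ Set.Icc (a-ρ) (a+ρ), deriv (deriv f) x ≤ 2*k) :
    ∀ r ∈ Set.Icc (a-ρ) (a+ρ), f r ≤ k*(r-a)^2 := by
  have ha : a ∈ Set.Icc (a-ρ) (a+ρ) := by constructor <;> linarith
  set F : ℝ → ℝ := fun x => k*(x-a)^2 - f x with hF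
  set F' : ℝ → ℝ := fun x => 2*k*(x-a) - deriv f x with hF'
  have hdF : ∀ x ∈ Set.Icc (a-ρ) (a+ρ), HasDerivAt F (F' x) x := by
    intro x hx
    have hq : HasDerivAt (fun x : ℝ => k*(x-a)^2) (2*k*(x-a)) x := by
      have := (((hasDerivAt_id x).sub_const a).pow 2).const_mul k
      refine (this.congr_deriv ?_)
      simp only [id_eq]
      push_cast
      ring
    exact hq.sub (hf1 x hx)
  have hdF' : ∀ x ∈ Set.Icc (a-ρ) (a+ρ), HasDerivAt F' (2*k - deriv (deriv f) x) x := by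
    intro x hx
    have hq : HasDerivAt (fun x : ℝ => 2*k*(x-a)) (2*k) x := by
      have := ((hasDerivAt_id x).sub_const a).const_mul (2*k)
      refine (this.congr_deriv ?_)
      ring
    exact hq.sub (hf2 x hx)
  have hmono' : MonotoneOn F' (Set.Icc (a-ρ) (a+ρ)) := by
    apply monotoneOn_of_deriv_nonneg (convex_Icc _ _)
    · intro x hx
      exact ((hdF' x hx).differentiableAt.continuousAt).continuousWithinAt
    · intro x hx
      rw [interior_Icc] at hx
      exact ((hdF' x (Set.Ioo_subset_Icc_self hx)).differentiableAt).differentiableWithinAt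
    · intro x hx
      rw [interior_Icc] at hx
      rw [(hdF' x (Set.Ioo_subset_Icc_self hx)).deriv]
      linarith [hk x (Set.Ioo_subset_Icc_self hx)]
  have hF'a : F' a = 0 := by simp [hF', h1]
  have hFa : F a = 0 := by simp [hF, h0]
  intro r hr
  have key : 0 ≤ F r := by
    rcases le_total a r with hra | hra
    · have hmF : MonotoneOn F (Set.Icc a (a+ρ)) := by
        have hsub : Set.Icc a (a+ρ) ⊆ Set.Icc (a-ρ) (a+ρ) :=
          Set.Icc_subset_Icc (by linarith) le_rfl
        apply monotoneOn_of_deriv_nonneg (convex_Icc _ _)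
        · intro x hx
          exact ((hdF x (hsub hx)).differentiableAt.continuousAt).continuousWithinAt
        · intro x hx
          rw [interior_Icc] at hx
          exact ((hdF x (hsub (Set.Ioo_subset_Icc_self hx))).differentiableAt).differentiableWithinAt
        · intro x hx
          rw [interior_Icc] at hx
          rw [(hdF x (hsub (Set.Ioo_subset_Icc_self hx))).deriv]
          have := hmono' ha (hsub (Set.Ioo_subset_Icc_self hx)) hx.1.le
          linarith [hF'a ▸ this]
      have := hmF (Set.left_mem_Icc.2 (by linarith)) ⟨hra, hr.2⟩ hra
      linarith [hFa ▸ this]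
    · have hmF : AntitoneOn F (Set.Icc (a-ρ) a) := by
        have hsub : Set.Icc (a-ρ) a ⊆ Set.Icc (a-ρ) (a+ρ) :=
          Set.Icc_subset_Icc le_rfl (by linarith)
        apply antitoneOn_of_deriv_nonpos (convex_Icc _ _)
        · intro x hx
          exact ((hdF x (hsub hx)).differentiableAt.continuousAt).continuousWithinAt
        · intro x hx
          rw [interior_Icc] at hx
          exact ((hdF x (hsub (Set.Ioo_subset_Icc_self hx))).differentiableAt).differentiableWithinAt
        · intro x hx
          rw [interior_Icc] at hx
          rw [(hdF x (hsub (Set.Ioo_subset_Icc_self hx))).deriv]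
          have := hmono' (hsub (Set.Ioo_subset_Icc_self hx)) ha hx.2.le
          linarith [hF'a ▸ this]
      have := hmF ⟨hr.1, hra⟩ (Set.right_mem_Icc.2 (by linarith)) hra
      linarith [hFa ▸ this]
  simp only [hF] at key
  linarith

lemma model_integral {k ε : ℝ} (hk : 0 < k) (hε : 0 < ε) (a T : ℝ) :
    ∫ r in (a-T)..(a+T), 1/(k*(r-a)^2 + ε)
      = 2 / Real.sqrt (k*ε) * Real.arctan (T * Real.sqrt (k/ε)) := by
  set s : ℝ := Real.sqrt (k/ε) with hsdef
  have hs : 0 < s := Real.sqrt_pos.2 (div_pos hk hε)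
  have hs2 : s^2 = k/ε := Real.sq_sqrt (div_pos hk hε).le
  have hu : Real.sqrt (k*ε) = s * ε := by
    rw [show k*ε = (k/ε)*ε^2 by field_simp, Real.sqrt_mul (div_pos hk hε).le,
      Real.sqrt_sq hε.le]
  have hH : ∀ x : ℝ, HasDerivAt (fun x => (1/(s*ε)) * Real.arctan ((x-a)*s))
      (1/(k*(x-a)^2 + ε)) x := by
    intro x
    have hinner : HasDerivAt (fun x : ℝ => (x-a)*s) s x := by
      have := ((hasDerivAt_id x).sub_const a).mul_const s
      simpa using this
    have := ((Real.hasDerivAt_arctan ((x-a)*s)).comp x hinner).const_mul (1/(s*ε))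
    refine (this.congr_deriv ?_)
    have hxs : ((x-a)*s)^2 = (x-a)^2 * (k/ε) := by rw [mul_pow, hs2]
    rw [hxs]
    have hd1 : k*(x-a)^2 + ε ≠ 0 := by positivity
    have hd2 : 1 + (x-a)^2 * (k/ε) ≠ 0 := by positivity
    field_simp
    ring
  have hcont : Continuous fun r : ℝ => 1/(k*(r-a)^2 + ε) := by
    apply continuous_const.div
    · continuity
    · intro x; positivity
  rw [intervalIntegral.integral_eq_sub_of_hasDerivAt (fun x _ => hH x)
    (hcont.intervalIntegrable _ _)]
  simp only [add_sub_cancel_left, sub_sub_cancel_left, neg_mul, Real.arctan_neg]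
  rw [hu]
  ring

lemma sqrt_tendsto_within : Tendsto (fun ε : ℝ => Real.sqrt ε) (𝓝[>] 0) (𝓝[>] 0) := by
  rw [tendsto_nhdsWithin_iff]
  constructor
  · exact ((Real.continuous_sqrt.tendsto 0).mono_left nhdsWithin_le_nhds).congr'
      (by filter_upwards with x using rfl) |>.congr (fun x => rfl) |>.mono_right
      (by rw [Real.sqrt_zero])
  · filter_upwards [self_mem_nhdsWithin] with x hx
    exact Real.sqrt_pos.2 hx

lemma model_tendsto {k ρ : ℝ} (hk : 0 < k) (hρ : 0 < ρ) (τ : ℝ → ℝ)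
    (hτlim : Tendsto (fun ε => τ ε / Real.sqrt ε) (𝓝[>] 0) atTop) :
    Tendsto (fun ε => Real.sqrt ε *
        (2 / Real.sqrt (k*ε) * Real.arctan (min ρ (τ ε) * Real.sqrt (k/ε))))
      (𝓝[>] 0) (𝓝 (Real.pi / Real.sqrt k)) := by
  have hsk : 0 < Real.sqrt k := Real.sqrt_pos.2 hk
  have hinv : Tendsto (fun ε : ℝ => (Real.sqrt ε)⁻¹) (𝓝[>] 0) atTop :=
    tendsto_inv_nhdsGT_zero.comp sqrt_tendsto_within
  have hρlim : Tendsto (fun ε : ℝ => ρ / Real.sqrt ε) (𝓝[>] 0) atTop := by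
    have := hinv.const_mul_atTop hρ
    exact this.congr (fun x => (div_eq_mul_inv ρ _).symm)
  have hmin : Tendsto (fun ε => min (ρ / Real.sqrt ε) (τ ε / Real.sqrt ε)) (𝓝[>] 0) atTop := by
    rw [tendsto_atTop]
    intro b
    filter_upwards [hρlim.eventually_ge_atTop b, hτlim.eventually_ge_atTop b] with x h1 h2
    exact le_min h1 h2
  have harg : Tendsto (fun ε => min ρ (τ ε) * Real.sqrt (k/ε)) (𝓝[>] 0) atTop := by
    apply (hmin.const_mul_atTop hsk).congr'
    filter_upwards [self_mem_nhdsWithin] with ε (hε : 0 < ε)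
    have hsε : 0 < Real.sqrt ε := Real.sqrt_pos.2 hε
    rw [min_div_div_right hsε.le, Real.sqrt_div hk.le]
    ring
  have hatan : Tendsto (fun ε => Real.arctan (min ρ (τ ε) * Real.sqrt (k/ε))) (𝓝[>] 0)
      (𝓝 (Real.pi/2)) :=
    ((Real.tendsto_arctan_atTop.mono_right nhdsWithin_le_nhds)).comp harg
  have hfinal := hatan.const_mul (2 / Real.sqrt k)
  have heq : (2 / Real.sqrt k) * (Real.pi/2) = Real.pi / Real.sqrt k := by ring
  rw [heq] at hfinal
  apply hfinal.congr'
  filter_upwards [self_mem_nhdsWithin] with ε (hε : 0 < ε)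
  have hsε : 0 < Real.sqrt ε := Real.sqrt_pos.2 hε
  rw [Real.sqrt_mul hk.le]
  field_simp

theorem stmt_3 (a δ ε₀ : ℝ) (hδ : 0 < δ) (hε₀ : 0 < ε₀) (g₀ : ℝ → ℝ) (τ : ℝ → ℝ)
    (hg : ContDiffOn ℝ 2 g₀ (Set.Icc (a - δ) (a + δ)))
    (hpos : ∀ r ∈ Set.Icc (a - δ) (a + δ), r ≠ a → 0 < g₀ r)
    (h0 : g₀ a = 0) (h1 : deriv g₀ a = 0) (h2 : 0 < deriv (deriv g₀) a)
    (hτ : ∀ ε ∈ Set.Ioo 0 ε₀, τ ε ∈ Set.Icc 0 δ)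
    (hτlim : Tendsto (fun ε => τ ε / Real.sqrt ε) (𝓝[>] 0) atTop) :
    Tendsto (fun ε => Real.sqrt ε * ∫ r in (a - τ ε)..(a + τ ε), 1 / (g₀ r + ε))
      (𝓝[>] 0) (𝓝 (Real.pi / Real.sqrt (deriv (deriv g₀) a / 2))) := by
  have hc : 0 < deriv (deriv g₀) a / 2 := half_pos h2
  set c : ℝ := deriv (deriv g₀) a / 2 with hcdef
  have hcb : 2 * c = deriv (deriv g₀) a := by rw [hcdef]; ring
  -- smoothness facts on the open interval
  set I : Set ℝ := Set.Ioo (a-δ) (a+δ) with hIdef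
  have hIopen : IsOpen I := isOpen_Ioo
  have haI : a ∈ I := by constructor <;> linarith
  have hgI : ContDiffOn ℝ 2 g₀ I := hg.mono Set.Ioo_subset_Icc_self
  have hd1 : ∀ x ∈ I, HasDerivAt g₀ (deriv g₀ x) x := fun x hx =>
    ((hgI.differentiableOn two_ne_zero).differentiableAt (hIopen.mem_nhds hx)).hasDerivAt
  have hC1 : ContDiffOn ℝ 1 (deriv g₀) I := hgI.deriv_of_isOpen (m := 1) hIopen (by norm_num)
  have hd2 : ∀ x ∈ I, HasDerivAt (deriv g₀) (deriv (deriv g₀) x) x := fun x hx =>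
    ((hC1.differentiableOn one_ne_zero).differentiableAt (hIopen.mem_nhds hx)).hasDerivAt
  have hcont2 : ContinuousOn (deriv (deriv g₀)) I :=
    (hC1.deriv_of_isOpen (m := 0) hIopen (by norm_num)).continuousOn
  have hge0 : ∀ r ∈ Set.Icc (a-δ) (a+δ), 0 ≤ g₀ r := by
    intro r hr
    rcases eq_or_ne r a with rfl | h
    · simp [h0]
    · exact (hpos r hr h).le
  rw [Metric.tendsto_nhds]
  intro p hp
  -- choose η
  have hq : ContinuousAt (fun t : ℝ => Real.pi / Real.sqrt t) c := by
    exact ContinuousAt.div continuousAt_const Real.continuous_sqrt.continuousAt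
      (ne_of_gt (Real.sqrt_pos.2 hc))
  rw [Metric.continuousAt_iff] at hq
  obtain ⟨d, hd0, hq⟩ := hq (p/2) (half_pos hp)
  set η : ℝ := min (d/2) (c/2) with hηdef
  have hη0 : 0 < η := lt_min (half_pos hd0) (half_pos hc)
  have hηc : η < c := lt_of_le_of_lt (min_le_right _ _) (by linarith)
  have hηd : η < d := lt_of_le_of_lt (min_le_left _ _) (by linarith)
  have hqm : |Real.pi / Real.sqrt (c-η) - Real.pi / Real.sqrt c| < p/2 := by
    have := hq (x := c - η) (by rw [Real.dist_eq]; rw [abs_sub_lt_iff]; constructor <;> linarith)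
    rw [Real.dist_eq] at this
    exact this
  have hqp : |Real.pi / Real.sqrt (c+η) - Real.pi / Real.sqrt c| < p/2 := by
    have := hq (x := c + η) (by rw [Real.dist_eq]; rw [abs_sub_lt_iff]; constructor <;> linarith)
    rw [Real.dist_eq] at this
    exact this
  -- choose ρ using continuity of the second derivative
  have hca : ContinuousAt (deriv (deriv g₀)) a := hcont2.continuousAt (hIopen.mem_nhds haI)
  rw [Metric.continuousAt_iff] at hca
  obtain ⟨ρ₁, hρ₁, hca⟩ := hca (2*η) (by linarith)
  set ρ : ℝ := min (ρ₁/2) (δ/2) with hρdef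
  have hρ0 : 0 < ρ := lt_min (half_pos hρ₁) (half_pos hδ)
  have hρδ2 : ρ ≤ δ/2 := min_le_right _ _
  have hρδ : ρ ≤ δ := by linarith
  have hIcc_sub : Set.Icc (a-ρ) (a+ρ) ⊆ I := by
    intro x hx
    constructor
    · have := hx.1; linarith
    · have := hx.2; linarith
  have hg2bound : ∀ x ∈ Set.Icc (a-ρ) (a+ρ),
      |deriv (deriv g₀) x - deriv (deriv g₀) a| < 2*η := by
    intro x hx
    apply hca
    rw [Real.dist_eq, abs_sub_lt_iff]
    have h1' := hx.1
    have h2' := hx.2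
    have : ρ ≤ ρ₁/2 := min_le_left _ _
    constructor <;> linarith
  -- quadratic bounds
  have hub : ∀ r ∈ Set.Icc (a-ρ) (a+ρ), g₀ r ≤ (c+η)*(r-a)^2 := by
    apply quad_bound hρ0 (fun x hx => hd1 x (hIcc_sub hx)) (fun x hx => hd2 x (hIcc_sub hx)) h0 h1
    intro x hx
    have := abs_sub_lt_iff.1 (hg2bound x hx)
    linarith [this.1]
  have hlb : ∀ r ∈ Set.Icc (a-ρ) (a+ρ), (c-η)*(r-a)^2 ≤ g₀ r := by
    have e1 : (deriv fun x => -g₀ x) = fun x => -deriv g₀ x := funext fun x => deriv.neg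
    have e2 : (deriv fun x => -deriv g₀ x) = fun x => -(deriv (deriv g₀) x) :=
      funext fun x => deriv.neg
    have hneg : ∀ r ∈ Set.Icc (a-ρ) (a+ρ), (fun x => -g₀ x) r ≤ (-(c-η))*(r-a)^2 := by
      apply quad_bound hρ0
      · intro x hx
        simp only [e1]
        exact (hd1 x (hIcc_sub hx)).neg
      · intro x hx
        simp only [e1, e2]
        exact (hd2 x (hIcc_sub hx)).neg
      · simp [h0]
      · simp only [e1]; simp [h1]
      · intro x hx
        simp only [e1, e2]
        have := abs_sub_lt_iff.1 (hg2bound x hx)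
        linarith [this.2]
    intro r hr
    have h' := hneg r hr
    simp only [neg_mul] at h'
    linarith
  -- the minimum of g₀ away from a
  obtain ⟨x₁, hx₁K, hx₁min⟩ := isCompact_Icc.exists_isMinOn
    (Set.nonempty_Icc.2 (by linarith : a-δ ≤ a-ρ))
    (hg.continuousOn.mono (Set.Icc_subset_Icc le_rfl (by linarith)))
  obtain ⟨x₂, hx₂K, hx₂min⟩ := isCompact_Icc.exists_isMinOn
    (Set.nonempty_Icc.2 (by linarith : a+ρ ≤ a+δ))
    (hg.continuousOn.mono (Set.Icc_subset_Icc (by linarith) le_rfl))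
  have hm₁ : 0 < g₀ x₁ := by
    apply hpos x₁ ⟨hx₁K.1, by linarith [hx₁K.2]⟩
    exact ne_of_lt (by linarith [hx₁K.2])
  have hm₂ : 0 < g₀ x₂ := by
    apply hpos x₂ ⟨by linarith [hx₂K.1], hx₂K.2⟩
    exact ne_of_gt (by linarith [hx₂K.1])
  set m : ℝ := min (g₀ x₁) (g₀ x₂) with hmdef
  have hm0 : 0 < m := lt_min hm₁ hm₂
  -- limits of the bounding functions
  have hcmη : 0 < c - η := by linarith
  have hcpη : 0 < c + η := by linarith
  have hlowerT := model_tendsto hcpη hρ0 τ hτlim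
  have hupperT0 := model_tendsto hcmη hρ0 τ hτlim
  have hz : Tendsto (fun ε : ℝ => Real.sqrt ε * (2*δ/m)) (𝓝[>] 0) (𝓝 0) := by
    have h' : Tendsto (fun ε : ℝ => Real.sqrt ε) (𝓝[>] 0) (𝓝 0) :=
      sqrt_tendsto_within.mono_right nhdsWithin_le_nhds
    simpa using h'.mul_const (2*δ/m)
  have hupperT : Tendsto (fun ε : ℝ => Real.sqrt ε *
      (2 / Real.sqrt ((c-η)*ε) * Real.arctan (min ρ (τ ε) * Real.sqrt ((c-η)/ε)))
      + Real.sqrt ε * (2*δ/m)) (𝓝[>] 0) (𝓝 (Real.pi / Real.sqrt (c-η))) := by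
    have := hupperT0.add hz
    rwa [add_zero] at this
  have hev1 : ∀ᶠ ε in 𝓝[>] (0:ℝ), Real.pi / Real.sqrt c - p < Real.sqrt ε *
      (2 / Real.sqrt ((c+η)*ε) * Real.arctan (min ρ (τ ε) * Real.sqrt ((c+η)/ε))) := by
    apply hlowerT.eventually (eventually_gt_nhds ?_)
    have := abs_sub_lt_iff.1 hqp
    linarith [this.2]
  have hev2 : ∀ᶠ ε in 𝓝[>] (0:ℝ), Real.sqrt ε *
      (2 / Real.sqrt ((c-η)*ε) * Real.arctan (min ρ (τ ε) * Real.sqrt ((c-η)/ε)))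
      + Real.sqrt ε * (2*δ/m) < Real.pi / Real.sqrt c + p := by
    apply hupperT.eventually (eventually_lt_nhds ?_)
    have := abs_sub_lt_iff.1 hqm
    linarith [this.1]
  -- the key pointwise bounds
  have key : ∀ ε ∈ Set.Ioo (0:ℝ) ε₀,
      Real.sqrt ε * (2 / Real.sqrt ((c+η)*ε) * Real.arctan (min ρ (τ ε) * Real.sqrt ((c+η)/ε)))
        ≤ Real.sqrt ε * ∫ r in (a - τ ε)..(a + τ ε), 1 / (g₀ r + ε) ∧
      Real.sqrt ε * ∫ r in (a - τ ε)..(a + τ ε), 1 / (g₀ r + ε)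
        ≤ Real.sqrt ε * (2 / Real.sqrt ((c-η)*ε) * Real.arctan (min ρ (τ ε) * Real.sqrt ((c-η)/ε)))
          + Real.sqrt ε * (2*δ/m) := by
    intro ε hεIoo
    obtain ⟨hε0, hεε₀⟩ := hεIoo
    obtain ⟨ht0, htδ⟩ := hτ ε ⟨hε0, hεε₀⟩
    set t : ℝ := τ ε with htdef
    set T : ℝ := min ρ t with hTdef
    have hT0 : 0 ≤ T := le_min hρ0.le ht0
    have hTt : T ≤ t := min_le_right _ _
    have hTρ : T ≤ ρ := min_le_left _ _
    have hgpos : ∀ r ∈ Set.Icc (a-δ) (a+δ), 0 < g₀ r + ε := fun r hr => by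
      linarith [hge0 r hr]
    have hcontI : ContinuousOn (fun r => 1/(g₀ r + ε)) (Set.Icc (a-δ) (a+δ)) :=
      ContinuousOn.div continuousOn_const (hg.continuousOn.add continuousOn_const)
        (fun r hr => (hgpos r hr).ne')
    have hii : ∀ x y : ℝ, x ∈ Set.Icc (a-δ) (a+δ) → y ∈ Set.Icc (a-δ) (a+δ) →
        IntervalIntegrable (fun r => 1/(g₀ r + ε)) volume x y := fun x y hx hy =>
      (hcontI.mono (Set.uIcc_subset_Icc hx hy)).intervalIntegrable
    have hmii : ∀ k : ℝ, 0 < k → ∀ x y : ℝ,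
        IntervalIntegrable (fun r => 1/(k*(r-a)^2 + ε)) volume x y := by
      intro k hk x y
      apply Continuous.intervalIntegrable
      apply continuous_const.div
      · exact (continuous_const.mul ((continuous_id.sub continuous_const).pow 2)).add continuous_const
      · intro r; positivity
    have hmem1 : a - t ∈ Set.Icc (a-δ) (a+δ) := ⟨by linarith, by linarith⟩
    have hmem2 : a + t ∈ Set.Icc (a-δ) (a+δ) := ⟨by linarith, by linarith⟩
    have hmem3 : a - T ∈ Set.Icc (a-δ) (a+δ) := ⟨by linarith, by linarith⟩
    have hmem4 : a + T ∈ Set.Icc (a-δ) (a+δ) := ⟨by linarith, by linarith⟩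
    have hsubρ : Set.Icc (a-T) (a+T) ⊆ Set.Icc (a-ρ) (a+ρ) :=
      Set.Icc_subset_Icc (by linarith) (by linarith)
    have hsubbig : Set.Icc (a-T) (a+T) ⊆ Set.Icc (a-δ) (a+δ) :=
      Set.Icc_subset_Icc (by linarith) (by linarith)
    have hsplitL : (∫ r in (a-t)..(a-T), 1/(g₀ r + ε)) + ∫ r in (a-T)..(a+t), 1/(g₀ r + ε)
        = ∫ r in (a-t)..(a+t), 1/(g₀ r + ε) :=
      intervalIntegral.integral_add_adjacent_intervals (hii _ _ hmem1 hmem3) (hii _ _ hmem3 hmem2)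
    have hsplitR : (∫ r in (a-T)..(a+T), 1/(g₀ r + ε)) + ∫ r in (a+T)..(a+t), 1/(g₀ r + ε)
        = ∫ r in (a-T)..(a+t), 1/(g₀ r + ε) :=
      intervalIntegral.integral_add_adjacent_intervals (hii _ _ hmem3 hmem4) (hii _ _ hmem4 hmem2)
    have hl_nn : 0 ≤ ∫ r in (a-t)..(a-T), 1/(g₀ r + ε) := by
      apply intervalIntegral.integral_nonneg (by linarith)
      intro u hu
      have hu' : u ∈ Set.Icc (a-δ) (a+δ) := ⟨by linarith [hu.1], by linarith [hu.2]⟩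
      exact div_nonneg zero_le_one (hgpos u hu').le
    have hr_nn : 0 ≤ ∫ r in (a+T)..(a+t), 1/(g₀ r + ε) := by
      apply intervalIntegral.integral_nonneg (by linarith)
      intro u hu
      have hu' : u ∈ Set.Icc (a-δ) (a+δ) := ⟨by linarith [hu.1], by linarith [hu.2]⟩
      exact div_nonneg zero_le_one (hgpos u hu').le
    have hmid_lb : (∫ r in (a-T)..(a+T), 1/((c+η)*(r-a)^2 + ε))
        ≤ ∫ r in (a-T)..(a+T), 1/(g₀ r + ε) := by
      apply intervalIntegral.integral_mono_on (by linarith) (hmii _ hcpη _ _) (hii _ _ hmem3 hmem4)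
      intro r hr
      exact one_div_le_one_div_of_le (hgpos r (hsubbig hr)) (by linarith [hub r (hsubρ hr)])
    have hmid_ub : (∫ r in (a-T)..(a+T), 1/(g₀ r + ε))
        ≤ ∫ r in (a-T)..(a+T), 1/((c-η)*(r-a)^2 + ε) := by
      apply intervalIntegral.integral_mono_on (by linarith) (hii _ _ hmem3 hmem4) (hmii _ hcmη _ _)
      intro r hr
      have h' : 0 < (c-η)*(r-a)^2 + ε := by positivity
      exact one_div_le_one_div_of_le h' (by linarith [hlb r (hsubρ hr)])
    constructor
    · rw [← model_integral hcpη hε0 a T]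
      apply mul_le_mul_of_nonneg_left _ (Real.sqrt_nonneg ε)
      calc (∫ r in (a-T)..(a+T), 1/((c+η)*(r-a)^2 + ε))
          ≤ ∫ r in (a-T)..(a+T), 1/(g₀ r + ε) := hmid_lb
        _ ≤ ∫ r in (a-t)..(a+t), 1/(g₀ r + ε) := by rw [← hsplitL, ← hsplitR]; linarith
    · rw [← model_integral hcmη hε0 a T]
      have hfull_ub : (∫ r in (a-t)..(a+t), 1/(g₀ r + ε))
          ≤ (∫ r in (a-T)..(a+T), 1/((c-η)*(r-a)^2 + ε)) + 2*δ/m := by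
        rcases le_total t ρ with htρ | hρt
        · have hTeq : T = t := min_eq_right htρ
          have heq : (∫ r in (a-t)..(a+t), 1/(g₀ r + ε))
              = ∫ r in (a-T)..(a+T), 1/(g₀ r + ε) := by rw [hTeq]
          rw [heq]
          have hnn : (0:ℝ) ≤ 2*δ/m := by positivity
          linarith
        · have hTeq : T = ρ := min_eq_left hρt
          have hleft : (∫ r in (a-t)..(a-T), 1/(g₀ r + ε)) ≤ δ/m := by
            have hle : (∫ r in (a-t)..(a-T), 1/(g₀ r + ε))
                ≤ ∫ _r in (a-t)..(a-T), (1/m : ℝ) := by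
              apply intervalIntegral.integral_mono_on (by linarith) (hii _ _ hmem1 hmem3)
                intervalIntegrable_const
              intro r hr
              have hrK : r ∈ Set.Icc (a-δ) (a-ρ) :=
                ⟨by linarith [hr.1], by rw [hTeq] at hr; linarith [hr.2]⟩
              have hmin := isMinOn_iff.1 hx₁min r hrK
              have hmr : m ≤ g₀ r := le_trans (min_le_left _ _) hmin
              exact one_div_le_one_div_of_le hm0 (by linarith)
            rw [intervalIntegral.integral_const, smul_eq_mul] at hle
            calc (∫ r in (a-t)..(a-T), 1/(g₀ r + ε)) ≤ ((a-T)-(a-t)) * (1/m) := hle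
              _ ≤ δ * (1/m) := by
                  apply mul_le_mul_of_nonneg_right _ (by positivity)
                  linarith
              _ = δ/m := by ring
          have hright : (∫ r in (a+T)..(a+t), 1/(g₀ r + ε)) ≤ δ/m := by
            have hle : (∫ r in (a+T)..(a+t), 1/(g₀ r + ε))
                ≤ ∫ _r in (a+T)..(a+t), (1/m : ℝ) := by
              apply intervalIntegral.integral_mono_on (by linarith) (hii _ _ hmem4 hmem2)
                intervalIntegrable_const
              intro r hr
              have hrK : r ∈ Set.Icc (a+ρ) (a+δ) :=
                ⟨by rw [hTeq] at hr; linarith [hr.1], by linarith [hr.2]⟩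
              have hmin := isMinOn_iff.1 hx₂min r hrK
              have hmr : m ≤ g₀ r := le_trans (min_le_right _ _) hmin
              exact one_div_le_one_div_of_le hm0 (by linarith)
            rw [intervalIntegral.integral_const, smul_eq_mul] at hle
            calc (∫ r in (a+T)..(a+t), 1/(g₀ r + ε)) ≤ ((a+t)-(a+T)) * (1/m) := hle
              _ ≤ δ * (1/m) := by
                  apply mul_le_mul_of_nonneg_right _ (by positivity)
                  linarith
              _ = δ/m := by ring
          rw [← hsplitL, ← hsplitR]
          have h2δ : δ/m + δ/m = 2*δ/m := by ring
          linarith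
      calc Real.sqrt ε * ∫ r in (a-t)..(a+t), 1/(g₀ r + ε)
          ≤ Real.sqrt ε * ((∫ r in (a-T)..(a+T), 1/((c-η)*(r-a)^2 + ε)) + 2*δ/m) :=
            mul_le_mul_of_nonneg_left hfull_ub (Real.sqrt_nonneg ε)
        _ = Real.sqrt ε * (∫ r in (a-T)..(a+T), 1/((c-η)*(r-a)^2 + ε))
            + Real.sqrt ε * (2*δ/m) := by ring
  -- conclusion
  filter_upwards [hev1, hev2, Ioo_mem_nhdsGT_of_mem ⟨le_refl (0:ℝ), hε₀⟩] with ε h1' h2' hεIoo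
  obtain ⟨hlo, hhi⟩ := key ε hεIoo
  rw [Real.dist_eq, abs_sub_lt_iff]
  constructor <;> linarith
end

section
/- Under the hypotheses of the previous lemma (g₀ C² on [a-δ,a+δ], positive away from a, g₀(a)=g₀'(a)=0, g₀''(a)>0, g_ε = g₀ + ε), one has √ε · ∫_{a-δ}^{a+δ} dr / g_ε(r) → π / √(g₀''(a)/2) as ε → 0⁺. -/
open MeasureTheory Filter Topology

section Aux
open Set

lemma taylorA (a δ : ℝ) (hδ : 0 < δ) (g₀ : ℝ → ℝ)
    (hg : ContDiffOn ℝ 2 g₀ (Set.Icc (a - δ) (a + δ)))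
    (h0 : g₀ a = 0) (h1 : deriv g₀ a = 0) :
    Tendsto (fun x => g₀ x / (x - a) ^ 2) (𝓝[≠] a)
      (𝓝 (deriv (deriv g₀) a / 2)) := by
  have hO : IsOpen (Set.Ioo (a - δ) (a + δ)) := isOpen_Ioo
  have haIoo : a ∈ Set.Ioo (a - δ) (a + δ) := ⟨by linarith, by linarith⟩
  have hIoo : ContDiffOn ℝ 2 g₀ (Set.Ioo (a - δ) (a + δ)) :=
    hg.mono Set.Ioo_subset_Icc_self
  have hmem : Set.Ioo (a - δ) (a + δ) ∈ 𝓝 a := hO.mem_nhds haIoo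
  have hdiff : ∀ x ∈ Set.Ioo (a - δ) (a + δ), HasDerivAt g₀ (deriv g₀ x) x := by
    intro x hx
    exact ((hIoo.contDiffAt (hO.mem_nhds hx)).differentiableAt (by norm_num)).hasDerivAt
  -- second derivative
  have hd1 : ContDiffOn ℝ 1 (deriv g₀) (Set.Ioo (a - δ) (a + δ)) := by
    exact hIoo.deriv_of_isOpen (m := 1) hO (by norm_num)
  have hL : HasDerivAt (deriv g₀) (deriv (deriv g₀) a) a :=
    ((hd1.contDiffAt hmem).differentiableAt (by norm_num)).hasDerivAt
  have hslope : Tendsto (slope (deriv g₀) a) (𝓝[≠] a) (𝓝 (deriv (deriv g₀) a)) :=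
    hasDerivAt_iff_tendsto_slope.mp hL
  have hdiv : Tendsto (fun x => deriv g₀ x / (2 * (x - a))) (𝓝[≠] a)
      (𝓝 (deriv (deriv g₀) a / 2)) := by
    have := hslope.div_const 2
    refine this.congr ?_
    intro x
    rw [slope_def_field]
    simp only [h1, sub_zero]
    rw [div_div]
    ring_nf
  apply HasDerivAt.lhopital_zero_nhdsNE (f' := fun x => deriv g₀ x)
      (g' := fun x => 2 * (x - a))
  · filter_upwards [nhdsWithin_le_nhds hmem] with x hx using hdiff x hx
  · filter_upwards with x
    have : HasDerivAt (fun x : ℝ => (x - a) ^ 2) (2 * (x - a) ^ 1 * 1) x :=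
      (((hasDerivAt_id x).sub_const a).pow 2)
    simpa using this
  · filter_upwards [self_mem_nhdsWithin] with x hx
    have : x ≠ a := hx
    intro h
    apply this
    have h2 : x - a = 0 := by linarith
    linarith
  · have hc : ContinuousAt g₀ a := (hIoo.contDiffAt hmem).continuousAt
    have := hc.tendsto
    rw [h0] at this
    exact tendsto_nhdsWithin_of_tendsto_nhds this
  · have : Tendsto (fun x : ℝ => (x - a) ^ 2) (𝓝 a) (𝓝 ((a - a) ^ 2)) := by
      exact (Continuous.pow (by continuity) 2).tendsto a
    simpa using tendsto_nhdsWithin_of_tendsto_nhds this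
  · exact hdiv

lemma lowerB (a δ : ℝ) (hδ : 0 < δ) (g₀ : ℝ → ℝ)
    (hg : ContDiffOn ℝ 2 g₀ (Set.Icc (a - δ) (a + δ)))
    (hpos : ∀ r ∈ Set.Icc (a - δ) (a + δ), r ≠ a → 0 < g₀ r)
    (hA : Tendsto (fun x => g₀ x / (x - a) ^ 2) (𝓝[≠] a)
      (𝓝 (deriv (deriv g₀) a / 2)))
    (h0 : g₀ a = 0) (h2 : 0 < deriv (deriv g₀) a) :
    ∃ k > 0, ∀ r ∈ Set.Icc (a - δ) (a + δ), k * (r - a) ^ 2 ≤ g₀ r := by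
  set c := deriv (deriv g₀) a / 2 with hc
  have hc0 : 0 < c := by positivity
  have hev : ∀ᶠ x in 𝓝[≠] a, c / 2 < g₀ x / (x - a) ^ 2 :=
    hA.eventually (eventually_gt_nhds (by linarith))
  rw [eventually_nhdsWithin_iff] at hev
  rw [Metric.eventually_nhds_iff] at hev
  obtain ⟨ρ, hρ0, hρ⟩ := hev
  set ρ' := min ρ δ with hρ'
  have hρ'0 : 0 < ρ' := lt_min hρ0 hδ
  -- compact piece
  set K := Set.Icc (a - δ) (a + δ) ∩ {r : ℝ | ρ' ≤ |r - a|} with hK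
  have hKc : IsCompact K := by
    apply isCompact_Icc.inter_right
    have : {r : ℝ | ρ' ≤ |r - a|} = (fun r => |r - a|) ⁻¹' Set.Ici ρ' := rfl
    rw [this]
    exact IsClosed.preimage (by continuity) isClosed_Ici
  have hKne : K.Nonempty := by
    refine ⟨a + δ, ⟨⟨by linarith, le_refl _⟩, ?_⟩⟩
    simp only [Set.mem_setOf_eq, add_sub_cancel_left]
    rw [abs_of_pos hδ]
    exact min_le_right _ _
  obtain ⟨x₀, hx₀K, hx₀min⟩ := hKc.exists_isMinOn hKne
    (hg.continuousOn.mono Set.inter_subset_left)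
  set m := g₀ x₀ with hm
  have hm0 : 0 < m := by
    apply hpos x₀ hx₀K.1
    intro h
    have := hx₀K.2
    rw [h] at this
    simp only [Set.mem_setOf_eq, sub_self, abs_zero] at this
    linarith
  refine ⟨min (c / 2) (m / δ ^ 2), lt_min (by linarith) (by positivity), ?_⟩
  intro r hr
  rcases eq_or_ne r a with h | h
  · simp [h, h0]
  rcases lt_or_ge (|r - a|) ρ' with hlt | hge
  · have hdist : dist r a < ρ := by
      rw [Real.dist_eq]; exact lt_of_lt_of_le hlt (min_le_left _ _)
    have := hρ hdist h
    have hra : r - a ≠ 0 := sub_ne_zero.mpr h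
    have hr2 : (0:ℝ) < (r - a) ^ 2 := by positivity
    have : c / 2 * (r - a) ^ 2 ≤ g₀ r := by
      rw [← le_div_iff₀ hr2] at *
      linarith
    calc min (c / 2) (m / δ ^ 2) * (r - a) ^ 2 ≤ c / 2 * (r - a) ^ 2 := by
          apply mul_le_mul_of_nonneg_right (min_le_left _ _) (le_of_lt hr2)
      _ ≤ g₀ r := this
  · have hrK : r ∈ K := ⟨hr, hge⟩
    have h1 : m ≤ g₀ r := hx₀min hrK
    have h2' : (r - a) ^ 2 ≤ δ ^ 2 := by
      have : |r - a| ≤ δ := by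
        rw [abs_le]; constructor <;> [linarith [hr.1]; linarith [hr.2]]
      calc (r - a) ^ 2 = |r - a| ^ 2 := (sq_abs _).symm
        _ ≤ δ ^ 2 := by nlinarith [abs_nonneg (r - a)]
    calc min (c / 2) (m / δ ^ 2) * (r - a) ^ 2 ≤ m / δ ^ 2 * δ ^ 2 := by
          apply mul_le_mul (min_le_right _ _) h2' (by positivity) (by positivity)
      _ = m := by field_simp
      _ ≤ g₀ r := h1

lemma ptC (a : ℝ) (g₀ : ℝ → ℝ) (c : ℝ) (hc : 0 < c)
    (hA : Tendsto (fun x => g₀ x / (x - a) ^ 2) (𝓝[≠] a) (𝓝 c))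
    (s : ℝ) (hs : s ≠ 0) :
    Tendsto (fun ε => ε / (g₀ (Real.sqrt ε * s + a) + ε)) (𝓝[>] 0)
      (𝓝 (1 / (c * s ^ 2 + 1))) := by
  have hmap : Tendsto (fun ε => Real.sqrt ε * s + a) (𝓝[>] (0:ℝ)) (𝓝[≠] a) := by
    rw [tendsto_nhdsWithin_iff]
    constructor
    · have : Tendsto (fun ε : ℝ => Real.sqrt ε * s + a) (𝓝 0)
          (𝓝 (Real.sqrt 0 * s + a)) := by
        exact ((Real.continuous_sqrt.tendsto 0).mul_const s).add_const a
      simpa using this.mono_left nhdsWithin_le_nhds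
    · filter_upwards [self_mem_nhdsWithin] with ε hε
      have hε0 : (0:ℝ) < ε := hε
      have : Real.sqrt ε * s ≠ 0 :=
        mul_ne_zero (Real.sqrt_pos.mpr hε0).ne' hs
      simp only [Set.mem_compl_iff, Set.mem_singleton_iff]
      intro h
      apply this
      linarith [h]
  have hcomp : Tendsto (fun ε => g₀ (Real.sqrt ε * s + a) /
      ((Real.sqrt ε * s + a) - a) ^ 2) (𝓝[>] (0:ℝ)) (𝓝 c) := hA.comp hmap
  have h2 : Tendsto (fun ε => (g₀ (Real.sqrt ε * s + a) /
      ((Real.sqrt ε * s + a) - a) ^ 2 * s ^ 2 + 1)⁻¹) (𝓝[>] (0:ℝ))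
      (𝓝 ((c * s ^ 2 + 1)⁻¹)) := by
    apply Tendsto.inv₀ (by exact (hcomp.mul_const _).add_const 1)
    positivity
  rw [one_div]
  apply h2.congr'
  filter_upwards [self_mem_nhdsWithin] with ε hε
  have hε0 : (0:ℝ) < ε := hε
  have hsq : ((Real.sqrt ε * s + a) - a) ^ 2 = ε * s ^ 2 := by
    rw [add_sub_cancel_right, mul_pow, Real.sq_sqrt hε0.le]
  rw [hsq]
  set G := g₀ (Real.sqrt ε * s + a)
  have hd : G / (ε * s ^ 2) * s ^ 2 + 1 = (G + ε) / ε := by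
    field_simp
  rw [hd, inv_div]

lemma intD (c : ℝ) (hc : 0 < c) :
    (∫ s : ℝ, 1 / (c * s ^ 2 + 1)) = Real.pi / Real.sqrt c := by
  have hfc : (fun s : ℝ => 1 / (c * s ^ 2 + 1)) =
      fun s => ((1:ℝ) + (Real.sqrt c * s) ^ 2)⁻¹ := by
    funext s
    rw [mul_pow, Real.sq_sqrt hc.le, one_div, add_comm]
  rw [hfc, Measure.integral_comp_mul_left (fun x : ℝ => ((1:ℝ) + x ^ 2)⁻¹)
    (Real.sqrt c), integral_univ_inv_one_add_sq, smul_eq_mul,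
    abs_of_pos (inv_pos.mpr (Real.sqrt_pos.mpr hc)), inv_mul_eq_div]

lemma integrableD (c : ℝ) (hc : 0 < c) :
    Integrable (fun s : ℝ => 1 / (c * s ^ 2 + 1)) := by
  have hfc : (fun s : ℝ => 1 / (c * s ^ 2 + 1)) =
      fun s => ((1:ℝ) + (Real.sqrt c * s) ^ 2)⁻¹ := by
    funext s
    rw [mul_pow, Real.sq_sqrt hc.le, one_div, add_comm]
  rw [hfc]
  exact integrable_inv_one_add_sq.comp_mul_left' (Real.sqrt_pos.mpr hc).ne'

end Aux

section Main

theorem stmt_4 (a δ : ℝ) (hδ : 0 < δ) (g₀ : ℝ → ℝ)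
    (hg : ContDiffOn ℝ 2 g₀ (Set.Icc (a - δ) (a + δ)))
    (hpos : ∀ r ∈ Set.Icc (a - δ) (a + δ), r ≠ a → 0 < g₀ r)
    (h0 : g₀ a = 0) (h1 : deriv g₀ a = 0) (h2 : 0 < deriv (deriv g₀) a) :
    Tendsto (fun ε => Real.sqrt ε * ∫ r in (a - δ)..(a + δ), 1 / (g₀ r + ε))
      (𝓝[>] 0) (𝓝 (Real.pi / Real.sqrt (deriv (deriv g₀) a / 2))) := by
  have hA := taylorA a δ hδ g₀ hg h0 h1
  set c : ℝ := deriv (deriv g₀) a / 2 with hcdef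
  have hc : 0 < c := by positivity
  obtain ⟨k, hk0, hk⟩ := lowerB a δ hδ g₀ hg hpos hA h0 h2
  have hnonneg : ∀ r ∈ Set.Icc (a - δ) (a + δ), 0 ≤ g₀ r := by
    intro r hr
    rcases eq_or_ne r a with h | h
    · simp [h, h0]
    · exact (hpos r hr h).le
  have hmaps : ∀ ε : ℝ, 0 < ε → ∀ s ∈ Set.Ioc (-(δ / Real.sqrt ε)) (δ / Real.sqrt ε),
      Real.sqrt ε * s + a ∈ Set.Icc (a - δ) (a + δ) := by
    intro ε hε s hs
    have hsε : 0 < Real.sqrt ε := Real.sqrt_pos.mpr hε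
    have hδε : Real.sqrt ε * (δ / Real.sqrt ε) = δ := by field_simp
    obtain ⟨hs1, hs2⟩ := hs
    constructor
    · have := mul_le_mul_of_nonneg_left hs1.le hsε.le
      rw [mul_neg, hδε] at this
      linarith
    · have := mul_le_mul_of_nonneg_left hs2 hsε.le
      rw [hδε] at this
      linarith
  -- Step 1: key substitution identity
  have key : ∀ᶠ ε in 𝓝[>] (0:ℝ),
      Real.sqrt ε * ∫ r in (a - δ)..(a + δ), 1 / (g₀ r + ε) =
      ∫ s : ℝ, (Set.Ioc (-(δ / Real.sqrt ε)) (δ / Real.sqrt ε)).indicator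
        (fun s => ε / (g₀ (Real.sqrt ε * s + a) + ε)) s := by
    filter_upwards [self_mem_nhdsWithin] with ε hε
    have hε0 : (0:ℝ) < ε := hε
    have hsε : 0 < Real.sqrt ε := Real.sqrt_pos.mpr hε0
    have hTle : -(δ / Real.sqrt ε) ≤ δ / Real.sqrt ε := by
      have : 0 < δ / Real.sqrt ε := div_pos hδ hsε
      linarith
    have hsub := intervalIntegral.integral_comp_mul_add
      (a := -(δ / Real.sqrt ε)) (b := δ / Real.sqrt ε)
      (fun r => ε / (g₀ r + ε)) hsε.ne' a
    have he1 : Real.sqrt ε * (-(δ / Real.sqrt ε)) + a = a - δ := by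
      field_simp; ring
    have he2 : Real.sqrt ε * (δ / Real.sqrt ε) + a = a + δ := by
      field_simp; ring
    rw [he1, he2] at hsub
    have hconst : (∫ r in (a - δ)..(a + δ), ε / (g₀ r + ε)) =
        ε * ∫ r in (a - δ)..(a + δ), 1 / (g₀ r + ε) := by
      rw [← intervalIntegral.integral_const_mul]
      congr 1
      funext r
      ring
    calc Real.sqrt ε * ∫ r in (a - δ)..(a + δ), 1 / (g₀ r + ε)
        = (Real.sqrt ε)⁻¹ • ∫ r in (a - δ)..(a + δ), ε / (g₀ r + ε) := by
          rw [hconst, smul_eq_mul, ← mul_assoc]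
          congr 1
          rw [← Real.mul_self_sqrt hε0.le]
          field_simp
          rw [Real.sqrt_sq hsε.le]
      _ = ∫ s in (-(δ / Real.sqrt ε))..(δ / Real.sqrt ε),
            ε / (g₀ (Real.sqrt ε * s + a) + ε) := hsub.symm
      _ = ∫ s in Set.Ioc (-(δ / Real.sqrt ε)) (δ / Real.sqrt ε),
            ε / (g₀ (Real.sqrt ε * s + a) + ε) :=
          intervalIntegral.integral_of_le hTle
      _ = _ := (integral_indicator measurableSet_Ioc).symm
  -- Step 2: dominated convergence
  have hlim : Tendsto (fun ε : ℝ => ∫ s : ℝ,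
      (Set.Ioc (-(δ / Real.sqrt ε)) (δ / Real.sqrt ε)).indicator
        (fun s => ε / (g₀ (Real.sqrt ε * s + a) + ε)) s)
      (𝓝[>] 0) (𝓝 (∫ s : ℝ, 1 / (c * s ^ 2 + 1))) := by
    apply tendsto_integral_filter_of_dominated_convergence
      (fun s : ℝ => 1 / (k * s ^ 2 + 1))
    · -- measurability
      filter_upwards [self_mem_nhdsWithin] with ε hε
      have hε0 : (0:ℝ) < ε := hε
      rw [aestronglyMeasurable_indicator_iff measurableSet_Ioc]
      apply ContinuousOn.aestronglyMeasurable _ measurableSet_Ioc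
      apply ContinuousOn.div continuousOn_const
      · exact (hg.continuousOn.comp (by fun_prop :
          Continuous fun s : ℝ => Real.sqrt ε * s + a).continuousOn
          (hmaps ε hε0)).add continuousOn_const
      · intro s hs
        have := hnonneg _ (hmaps ε hε0 s hs)
        positivity
    · -- bound
      filter_upwards [self_mem_nhdsWithin] with ε hε
      apply ae_of_all
      intro s
      have hε0 : (0:ℝ) < ε := hε
      by_cases hsmem : s ∈ Set.Ioc (-(δ / Real.sqrt ε)) (δ / Real.sqrt ε)
      · rw [Set.indicator_of_mem hsmem]
        have hrIcc := hmaps ε hε0 s hsmem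
        have hlb := hk _ hrIcc
        have hra : Real.sqrt ε * s + a - a = Real.sqrt ε * s := by ring
        rw [hra, mul_pow, Real.sq_sqrt hε0.le] at hlb
        have hgnn := hnonneg _ hrIcc
        have hpos1 : (0:ℝ) < k * (ε * s ^ 2) + ε := by positivity
        rw [Real.norm_eq_abs, abs_of_nonneg (by positivity)]
        calc ε / (g₀ (Real.sqrt ε * s + a) + ε) ≤ ε / (k * (ε * s ^ 2) + ε) := by
              apply div_le_div_of_nonneg_left hε0.le hpos1
              linarith
          _ = 1 / (k * s ^ 2 + 1) := by
              rw [div_eq_div_iff hpos1.ne' (by positivity : (0:ℝ) < k * s ^ 2 + 1).ne']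
              ring
      · rw [Set.indicator_of_notMem hsmem, norm_zero]
        positivity
    · exact integrableD k hk0
    · -- pointwise a.e. limit
      have hae : ∀ᵐ s : ℝ, s ≠ (0:ℝ) := by
        rw [ae_iff]
        simpa using Real.volume_singleton (x := (0:ℝ))
      filter_upwards [hae] with s hs
      apply (ptC a g₀ c hc hA s hs).congr'
      have hη : (0:ℝ) < (δ / |s|) ^ 2 := by positivity
      filter_upwards [Ioo_mem_nhdsGT_of_mem (Set.mem_Ico.mpr ⟨le_refl 0, hη⟩)]
        with ε hεm
      obtain ⟨hε0, hεη⟩ := hεm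
      have hsε : 0 < Real.sqrt ε := Real.sqrt_pos.mpr hε0
      have habs : |s| < δ / Real.sqrt ε := by
        have h1' : Real.sqrt ε < δ / |s| := by
          have := Real.sqrt_lt_sqrt hε0.le hεη
          rwa [Real.sqrt_sq (by positivity)] at this
        rw [lt_div_iff₀ hsε]
        rw [lt_div_iff₀ (abs_pos.mpr hs)] at h1'
        linarith [h1']
      have hsmem : s ∈ Set.Ioc (-(δ / Real.sqrt ε)) (δ / Real.sqrt ε) := by
        rw [Set.mem_Ioc]
        rw [abs_lt] at habs
        exact ⟨habs.1, habs.2.le⟩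
      rw [Set.indicator_of_mem hsmem]
  rw [← intD c hc]
  exact hlim.congr' (by filter_upwards [key] with ε h using h.symm)
end Main
end
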